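/- Let K be a field, let d_1, d_2, ..., d_r, d_{r+1} be nonnegative integers, and let G: K → K^m be given by G(t) = C·(t^{d_1}, t^{d_2}, ..., t^{d_r}, t^{d_{r+1}})^T for a matrix C ∈ Mat_{m,r+1}(K). Suppose a_1, ..., a_r ∈ K satisfy G(a_1) = G(a_2) = ... = G(a_r) = 0 and that the r×r generalized Vandermonde matrix A^{(r,r)} with (i,j)-entry a_j^{d_i} has rank r. Then rank C ≤ 1, and if C ≠ 0 then the last column of C (the column of coefficients of t^{d_{r+1}}) is nonzero. -/

import Mathlib

/-- If `G(t) = C • (t^{d₁}, …, t^{d_{r+1}})` vanishes at `a₁, …, a_r`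
and the generalized Vandermonde matrix `A^{(r,r)}` has rank `r`, then `rank C ≤ 1`,
and if `C ≠ 0` then the last column of `C` is nonzero. -/
theorem rank_le_one_of_generalized_vandermonde
    {K : Type*} [Field K] {m r : ℕ}
    (C : Matrix (Fin m) (Fin (r + 1)) K) (d : Fin (r + 1) → ℕ) (a : Fin r → K)
    (hG : ∀ i : Fin r, C.mulVec (fun j => a i ^ d j) = 0)
    (hV : (Matrix.of fun i j : Fin r => a j ^ d i.castSucc).rank = r) :
    C.rank ≤ 1 ∧ (C ≠ 0 → (fun i => C i (Fin.last r)) ≠ 0) := by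
  classical
  set V : Matrix (Fin r) (Fin r) K := Matrix.of fun i j : Fin r => a j ^ d i.castSucc with hVdef
  set B : Matrix (Fin r) (Fin (r + 1)) K := Matrix.of fun i j => a i ^ d j with hBdef
  -- V.transpose.mulVecLin is injective
  have hVT : V.transpose.rank = r := by rw [Matrix.rank_transpose]; exact hV
  have hker : LinearMap.ker V.transpose.mulVecLin = ⊥ := by
    have h1 := LinearMap.finrank_range_add_finrank_ker V.transpose.mulVecLin
    rw [Module.finrank_fin_fun] at h1
    have h2 : Module.finrank K (LinearMap.range V.transpose.mulVecLin) = r := hVT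
    rw [h2] at h1
    have h3 : Module.finrank K (LinearMap.ker V.transpose.mulVecLin) = 0 := by omega
    exact Submodule.finrank_eq_zero.mp h3
  have hVinj : Function.Injective V.transpose.mulVecLin := LinearMap.ker_eq_bot.mp hker
  -- key: vectors in ker B with vanishing last coordinate are zero
  have key : ∀ x : Fin (r + 1) → K, B.mulVec x = 0 → x (Fin.last r) = 0 → x = 0 := by
    intro x hx hlast
    have hx' : V.transpose.mulVecLin (fun j => x j.castSucc) = 0 := by
      funext i
      have h := congrFun hx i
      simp only [Matrix.mulVec, dotProduct, hBdef, Matrix.of_apply, Pi.zero_apply,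
        Fin.sum_univ_castSucc, hlast, mul_zero, add_zero] at h
      simpa [Matrix.mulVecLin, Matrix.mulVec, dotProduct, hVdef,
        Matrix.transpose_apply, Matrix.vecMul, mul_comm] using h
    have hx0 : (fun j : Fin r => x j.castSucc) = 0 := by
      apply hVinj
      simpa using hx'
    funext j
    refine Fin.lastCases ?_ ?_ j
    · exact hlast
    · intro i; exact congrFun hx0 i
  -- each row of C is in the kernel of B
  have hrow : ∀ k : Fin m, B.mulVec (fun j => C k j) = 0 := by
    intro k
    funext i
    have h := congrFun (hG i) k
    simp only [Matrix.mulVec, dotProduct, Pi.zero_apply] at h ⊢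
    simp only [hBdef, Matrix.of_apply]
    rw [← h]
    exact Finset.sum_congr rfl fun j _ => mul_comm _ _
  -- kernel of B has dimension ≤ 1
  have hkerB : Module.finrank K (LinearMap.ker B.mulVecLin) ≤ 1 := by
    have hinj : Function.Injective
        ((LinearMap.proj (Fin.last r) : (Fin (r + 1) → K) →ₗ[K] K) ∘ₗ
          (LinearMap.ker B.mulVecLin).subtype) := by
      intro x y hxy
      apply Subtype.ext
      have hsub : B.mulVec (x.1 - y.1) = 0 := by
        have hx := x.2
        have hy := y.2
        rw [LinearMap.mem_ker] at hx hy
        have : B.mulVecLin (x.1 - y.1) = 0 := by rw [map_sub, hx, hy, sub_zero]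
        simpa using this
      have hlast : (x.1 - y.1) (Fin.last r) = 0 := by
        simpa [sub_eq_zero] using hxy
      have := key _ hsub hlast
      exact sub_eq_zero.mp this
    have := LinearMap.finrank_le_finrank_of_injective hinj
    simpa using this
  constructor
  · -- rank C ≤ 1
    rw [← Matrix.rank_transpose]
    have hBC : B * C.transpose = 0 := by
      ext i k
      have h := congrFun (hrow k) i
      simpa [Matrix.mul_apply, Matrix.mulVec, dotProduct] using h
    have hle : LinearMap.range C.transpose.mulVecLin ≤ LinearMap.ker B.mulVecLin := by
      rw [LinearMap.range_le_ker_iff, ← Matrix.mulVecLin_mul, hBC]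
      exact Matrix.mulVecLin_zero
    calc C.transpose.rank = Module.finrank K (LinearMap.range C.transpose.mulVecLin) := rfl
      _ ≤ Module.finrank K (LinearMap.ker B.mulVecLin) := Submodule.finrank_mono hle
      _ ≤ 1 := hkerB
  · -- last column nonzero if C ≠ 0
    intro hC hlastcol
    apply hC
    ext k j
    have hx := key (fun j => C k j) (hrow k) (congrFun hlastcol k)
    simpa using congrFun hx j
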